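/- Let f(t) = (2/π)cos(πt/2) and h(t) = 2/π on [-1,1]. Then for d = n = 2, the expression -h''/h + (1-h'²)/h² - f'h'/(fh) + 3/h² - 2f²/h⁴ equals π²(4 - 2cos²(πt/2))/4, which is at least π²/2 > 0 for all t. -/

import Mathlib

/-- explicit evaluation of the horizontal Ricci curvature with
f(t) = (2/π)cos(πt/2), h ≡ 2/π. -/
theorem stmt9 (f h : ℝ → ℝ)
    (hf : ∀ t, f t = (2 / Real.pi) * Real.cos (Real.pi * t / 2))
    (hh : ∀ t, h t = 2 / Real.pi) :
    ∀ t : ℝ,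
      (-(deriv (deriv h) t) / h t + (1 - (deriv h t)^2) / (h t)^2
          - (deriv f t * deriv h t) / (f t * h t)
          + 3 / (h t)^2 - 2 * (f t)^2 / (h t)^4
        = Real.pi^2 * (4 - 2 * (Real.cos (Real.pi * t / 2))^2) / 4) ∧
      Real.pi^2 / 2 ≤ Real.pi^2 * (4 - 2 * (Real.cos (Real.pi * t / 2))^2) / 4 ∧
      0 < Real.pi^2 / 2 := by
  have hpi := Real.pi_pos
  have hconst : h = fun _ => 2 / Real.pi := funext hh
  have hd : deriv h = fun _ => (0 : ℝ) := by
    rw [hconst]; funext x; simp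
  intro t
  refine ⟨?_, ?_, ?_⟩
  · rw [hd, hconst, hf]
    simp only [deriv_const]
    have hpne : Real.pi ≠ 0 := ne_of_gt hpi
    have hcos : (Real.cos (Real.pi * t / 2))^2 ≤ 1 := Real.cos_sq_le_one _
    field_simp
    ring
  · have hcos : (Real.cos (Real.pi * t / 2))^2 ≤ 1 := Real.cos_sq_le_one _
    have : (0:ℝ) < Real.pi^2 := by positivity
    nlinarith
  · positivity
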